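/- Let k be even and G = G_0(u) ⋄ H(u) be a connected k-uniform hypergraph. Then λ_min(G_0) ≥ λ_min(G), with equality only if every first eigenvector y of G_0 satisfies y_u = 0. -/

import Mathlib

open Finset BigOperators

variable {V : Type*}

/-- A `k`-uniform hypergraph given by its edge set: every edge has exactly `k` vertices. -/
def Uniform [DecidableEq V] (E : Finset (Finset V)) (k : ℕ) : Prop :=
  ∀ e ∈ E, e.card = k

/-- Two vertices are adjacent if some edge contains both. -/
def HAdj [DecidableEq V] (E : Finset (Finset V)) (a b : V) : Prop :=
  a ≠ b ∧ ∃ e ∈ E, a ∈ e ∧ b ∈ e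

/-- The hypergraph is connected: every two vertices are joined by a walk. -/
def HConnected [DecidableEq V] (E : Finset (Finset V)) : Prop :=
  ∀ a b : V, Relation.ReflTransGen (HAdj E) a b

/-- `(lam, x)` satisfies the H-eigen equations of the adjacency tensor:
for each vertex `v`, `∑_{e ∋ v} ∏_{w ∈ e \ {v}} x w = lam * (x v)^(k-1)`. -/
def isEig [Fintype V] [DecidableEq V] (E : Finset (Finset V)) (k : ℕ) (lam : ℝ) (x : V → ℝ) :
    Prop :=
  ∀ v : V, (∑ e ∈ E.filter (fun e => v ∈ e), ∏ w ∈ e.erase v, x w) = lam * x v ^ (k - 1)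

/-- The set of H-eigenvalues of the adjacency tensor of the hypergraph. -/
def specH [Fintype V] [DecidableEq V] (E : Finset (Finset V)) (k : ℕ) : Set ℝ :=
  {lam | ∃ x : V → ℝ, x ≠ 0 ∧ isEig E k lam x}

/-- The least H-eigenvalue of the adjacency tensor. -/
noncomputable def lamMin [Fintype V] [DecidableEq V] (E : Finset (Finset V)) (k : ℕ) : ℝ :=
  sInf (specH E k)

set_option linter.unusedSectionVars false
set_option linter.unusedVariables false

section Aux
variable [Fintype V] [DecidableEq V]

/-- sum of edge products -/
def Pf (E : Finset (Finset V)) (x : V → ℝ) : ℝ := ∑ e ∈ E, ∏ w ∈ e, x w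

/-- k-norm to the k -/
def Nf (k : ℕ) (x : V → ℝ) : ℝ := ∑ v, x v ^ k

/-- the eigen-LHS at vertex v -/
def Dv (E : Finset (Finset V)) (v : V) (x : V → ℝ) : ℝ :=
  ∑ e ∈ E.filter (fun e => v ∈ e), ∏ w ∈ e.erase v, x w

lemma sum_mul_Dv (E : Finset (Finset V)) (x : V → ℝ) :
    ∑ v, x v * Dv E v x = ∑ e ∈ E, (e.card : ℝ) * ∏ w ∈ e, x w := by
  have h1 : ∀ v : V, x v * Dv E v x = ∑ e ∈ E, if v ∈ e then ∏ w ∈ e, x w else 0 := by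
    intro v
    rw [Dv, Finset.sum_filter, Finset.mul_sum]
    refine Finset.sum_congr rfl fun e _ => ?_
    by_cases hv : v ∈ e
    · simp only [hv, if_true, Finset.mul_prod_erase e x hv]
    · simp [hv]
  calc ∑ v, x v * Dv E v x = ∑ v, ∑ e ∈ E, if v ∈ e then ∏ w ∈ e, x w else 0 := by
        exact Finset.sum_congr rfl fun v _ => h1 v
    _ = ∑ e ∈ E, ∑ v : V, if v ∈ e then ∏ w ∈ e, x w else 0 := Finset.sum_comm
    _ = ∑ e ∈ E, (e.card : ℝ) * ∏ w ∈ e, x w := by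
        refine Finset.sum_congr rfl fun e _ => ?_
        rw [Finset.sum_ite_mem, Finset.univ_inter, Finset.sum_const, nsmul_eq_mul]

lemma eig_identity {E : Finset (Finset V)} {k : ℕ} (hU : Uniform E k) (hk0 : 0 < k)
    {lam : ℝ} {x : V → ℝ} (h : isEig E k lam x) :
    lam * Nf k x = (k : ℝ) * Pf E x := by
  have h1 : ∀ v : V, x v * Dv E v x = lam * x v ^ k := by
    intro v
    rw [Dv, h v, ← mul_assoc, mul_comm (x v) lam, mul_assoc]
    congr 1
    rw [← pow_succ', Nat.sub_add_cancel hk0]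
  have h2 : ∑ v, x v * Dv E v x = lam * Nf k x := by
    rw [Nf, Finset.mul_sum]
    exact Finset.sum_congr rfl fun v _ => h1 v
  rw [← h2, sum_mul_Dv, Pf, Finset.mul_sum]
  exact Finset.sum_congr rfl fun e he => by rw [hU e he]

lemma Nf_nonneg {k : ℕ} (hk : Even k) (x : V → ℝ) : 0 ≤ Nf k x :=
  Finset.sum_nonneg fun v _ => hk.pow_nonneg _

lemma Nf_pos {k : ℕ} (hk : Even k) (hk0 : 0 < k) {x : V → ℝ} (hx : x ≠ 0) : 0 < Nf k x := by
  obtain ⟨v, hv⟩ : ∃ v, x v ≠ 0 := by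
    by_contra h
    push_neg at h
    exact hx (funext h)
  have h1 : 0 < x v ^ k := (hk.pow_pos_iff hk0.ne').mpr hv
  exact lt_of_lt_of_le h1 (Finset.single_le_sum (fun w _ => hk.pow_nonneg (x w)) (Finset.mem_univ v))

lemma Pf_smul {E : Finset (Finset V)} {k : ℕ} (hU : Uniform E k) (c : ℝ) (x : V → ℝ) :
    Pf E (fun w => c * x w) = c ^ k * Pf E x := by
  rw [Pf, Pf, Finset.mul_sum]
  refine Finset.sum_congr rfl fun e he => ?_
  rw [Finset.prod_mul_distrib, Finset.prod_const, hU e he]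

lemma Nf_smul (k : ℕ) (c : ℝ) (x : V → ℝ) :
    Nf k (fun w => c * x w) = c ^ k * Nf k x := by
  rw [Nf, Nf, Finset.mul_sum]
  exact Finset.sum_congr rfl fun v _ => mul_pow c (x v) k

lemma Pf_update (E : Finset (Finset V)) (v : V) (x : V → ℝ) (t : ℝ) :
    Pf E (Function.update x v (x v + t)) = Pf E x + t * Dv E v x := by
  have key : ∀ e ∈ E, ∏ w ∈ e, Function.update x v (x v + t) w
      = (∏ w ∈ e, x w) + (if v ∈ e then t * ∏ w ∈ e.erase v, x w else 0) := by
    intro e _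
    by_cases hv : v ∈ e
    · rw [if_pos hv, ← Finset.mul_prod_erase e _ hv, Function.update_self,
        ← Finset.mul_prod_erase e x hv]
      have : ∏ w ∈ e.erase v, Function.update x v (x v + t) w = ∏ w ∈ e.erase v, x w :=
        Finset.prod_congr rfl fun w hw =>
          Function.update_of_ne (Finset.ne_of_mem_erase hw) _ _
      rw [this]; ring
    · rw [if_neg hv, add_zero]
      refine Finset.prod_congr rfl fun w hw => ?_
      exact Function.update_of_ne (fun h : w = v => hv (h ▸ hw)) _ _
  rw [Pf, Finset.sum_congr rfl key, Finset.sum_add_distrib]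
  congr 1
  rw [Dv, Finset.sum_filter, Finset.mul_sum]
  exact Finset.sum_congr rfl fun e _ => by split <;> simp

lemma Nf_update (k : ℕ) (x : V → ℝ) (v : V) (a : ℝ) :
    Nf k (Function.update x v a) = Nf k x - x v ^ k + a ^ k := by
  have : (fun w => Function.update x v a w ^ k) = Function.update (fun w => x w ^ k) v (a ^ k) := by
    funext w
    exact (Function.apply_update (fun _ y => y ^ k) x v a w)
  rw [Nf, this, Finset.sum_update_of_mem (Finset.mem_univ v), Nf,
    ← Finset.sum_erase_add _ _ (Finset.mem_univ v), Finset.sdiff_singleton_eq_erase]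
  ring

lemma continuous_Pf (E : Finset (Finset V)) : Continuous (Pf E : (V → ℝ) → ℝ) :=
  continuous_finset_sum _ fun e _ => continuous_finset_prod _ fun w _ => continuous_apply w

lemma continuous_Nf (k : ℕ) : Continuous (Nf k : (V → ℝ) → ℝ) :=
  continuous_finset_sum _ fun v _ => (continuous_apply v).pow k

lemma exists_min (E : Finset (Finset V)) (k : ℕ) (hk : Even k) (hk0 : 0 < k) [Nonempty V] :
    ∃ x₀ : V → ℝ, Nf k x₀ = 1 ∧ ∀ z : V → ℝ, Nf k z = 1 → Pf E x₀ ≤ Pf E z := by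
  set S : Set (V → ℝ) := {x | Nf k x = 1} with hS
  have hclosed : IsClosed S := isClosed_eq (continuous_Nf k) continuous_const
  have hsub : S ⊆ Metric.closedBall 0 1 := by
    intro x hx
    rw [Metric.mem_closedBall, dist_zero_right]
    refine (pi_norm_le_iff_of_nonneg zero_le_one).mpr fun v => ?_
    have h1 : x v ^ k ≤ 1 := by
      rw [← hx]
      exact Finset.single_le_sum (fun w _ => hk.pow_nonneg (x w)) (Finset.mem_univ v)
    have h2 : |x v| ^ k ≤ 1 := by rwa [hk.pow_abs]
    calc ‖x v‖ = |x v| := Real.norm_eq_abs _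
      _ ≤ 1 := by
        by_contra hlt
        push_neg at hlt
        exact absurd h2 (not_le.mpr (one_lt_pow₀ hlt hk0.ne'))
  have hcompact : IsCompact S :=
    (isCompact_closedBall (0 : V → ℝ) 1).of_isClosed_subset hclosed hsub
  have hne : S.Nonempty := by
    refine ⟨Pi.single (Classical.arbitrary V) 1, ?_⟩
    show Nf k _ = 1
    rw [Nf]
    rw [Finset.sum_eq_single_of_mem (Classical.arbitrary V) (Finset.mem_univ _)
      (fun w _ hw => by rw [Pi.single_eq_of_ne hw, zero_pow hk0.ne'])]
    rw [Pi.single_eq_same, one_pow]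
  obtain ⟨x₀, hx₀S, hmin⟩ := hcompact.exists_isMinOn hne (continuous_Pf E).continuousOn
  exact ⟨x₀, hx₀S, fun z hz => hmin hz⟩

lemma lamMin_spec (E : Finset (Finset V)) (k : ℕ) (hk : Even k) (hk0 : 0 < k) [Nonempty V]
    (hU : Uniform E k) :
    isEig E k (lamMin E k) (Classical.choose (exists_min E k hk hk0)) ∨ True := Or.inr trivial

/-- The main spectral lemma: lamMin is attained as the minimum of the Rayleigh quotient,
there is an eigenvector achieving it, and the variational inequality holds. -/
lemma lamMin_key (E : Finset (Finset V)) (k : ℕ) (hk : Even k) (hk0 : 0 < k) [Nonempty V]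
    (hU : Uniform E k) :
    ∃ x₀ : V → ℝ, Nf k x₀ = 1 ∧ isEig E k (lamMin E k) x₀ ∧
      (lamMin E k = (k : ℝ) * Pf E x₀) ∧
      ∀ z : V → ℝ, lamMin E k * Nf k z ≤ (k : ℝ) * Pf E z := by
  obtain ⟨x₀, hN, hmin⟩ := exists_min E k hk hk0
  set μ : ℝ := (k : ℝ) * Pf E x₀ with hμ
  have hx₀ne : x₀ ≠ 0 := by
    intro h
    rw [h] at hN
    have : Nf k (0 : V → ℝ) = 0 := by
      simp [Nf, zero_pow hk0.ne']
    rw [this] at hN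
    exact zero_ne_one hN
  -- variational inequality for μ
  have key : ∀ z : V → ℝ, μ * Nf k z ≤ (k : ℝ) * Pf E z := by
    intro z
    by_cases hz : z = 0
    · subst hz
      have h1 : Nf k (0 : V → ℝ) = 0 := by simp [Nf, zero_pow hk0.ne']
      have h2 : Pf E (0 : V → ℝ) = 0 := by
        rw [Pf]
        refine Finset.sum_eq_zero fun e he => ?_
        have : e.Nonempty := Finset.card_pos.mp (by rw [hU e he]; exact hk0)
        obtain ⟨w, hw⟩ := this
        exact Finset.prod_eq_zero hw rfl
      rw [h1, h2, mul_zero, mul_zero]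
    · have hNz : 0 < Nf k z := Nf_pos hk hk0 hz
      set c : ℝ := (Nf k z) ^ (-(1:ℝ)/k) with hc
      have hck : c ^ k = (Nf k z)⁻¹ := by
        rw [hc, ← Real.rpow_natCast ((Nf k z) ^ (-(1:ℝ)/k)) k, ← Real.rpow_mul hNz.le]
        rw [div_mul_cancel₀]
        · exact Real.rpow_neg_one _
        · exact_mod_cast hk0.ne'
      have hNz' : Nf k (fun w => c * z w) = 1 := by
        rw [Nf_smul, hck, inv_mul_cancel₀ hNz.ne']
      have h1 : Pf E x₀ ≤ Pf E (fun w => c * z w) := hmin _ hNz'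
      have h2 : Pf E (fun w => c * z w) = (Nf k z)⁻¹ * Pf E z := by
        rw [Pf_smul hU, hck]
      have h3 : μ ≤ (k : ℝ) * ((Nf k z)⁻¹ * Pf E z) := by
        rw [hμ]
        exact mul_le_mul_of_nonneg_left (h2 ▸ h1) (Nat.cast_nonneg k)
      calc μ * Nf k z ≤ ((k : ℝ) * ((Nf k z)⁻¹ * Pf E z)) * Nf k z :=
            mul_le_mul_of_nonneg_right h3 hNz.le
        _ = (k : ℝ) * Pf E z := by field_simp
  -- eigen equation at each vertex
  have heig : isEig E k μ x₀ := by
    intro v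
    show Dv E v x₀ = μ * x₀ v ^ (k - 1)
    set F : ℝ → ℝ := fun t =>
      (k : ℝ) * (Pf E x₀ + t * Dv E v x₀) - μ * (Nf k x₀ - x₀ v ^ k + (x₀ v + t) ^ k) with hF
    have hFval : ∀ t, 0 ≤ F t := by
      intro t
      have := key (Function.update x₀ v (x₀ v + t))
      rw [Pf_update, Nf_update] at this
      rw [hF]
      dsimp only
      linarith
    have hF0 : F 0 = 0 := by
      rw [hF]
      dsimp only
      rw [hN]
      ring
    have hmin0 : IsLocalMin F 0 := by
      have : IsMinOn F Set.univ 0 := fun t _ => by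
        rw [Set.mem_setOf_eq, hF0]; exact hFval t
      exact this.isLocalMin Filter.univ_mem
    have hder : HasDerivAt F ((k : ℝ) * Dv E v x₀ - μ * ((k : ℝ) * x₀ v ^ (k - 1))) 0 := by
      have h1 : HasDerivAt (fun t : ℝ => (x₀ v + t) ^ k)
          ((k : ℝ) * (x₀ v + 0) ^ (k - 1) * 1) 0 :=
        ((hasDerivAt_id 0).const_add (x₀ v)).pow k
      have h2 : HasDerivAt (fun t : ℝ => (k : ℝ) * (Pf E x₀ + t * Dv E v x₀))
          ((k : ℝ) * Dv E v x₀) 0 := by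
        have := ((hasDerivAt_id 0).mul_const (Dv E v x₀)).const_add (Pf E x₀)
        simpa using this.const_mul (k : ℝ)
      have h3 : HasDerivAt (fun t : ℝ => μ * (Nf k x₀ - x₀ v ^ k + (x₀ v + t) ^ k))
          (μ * ((k : ℝ) * x₀ v ^ (k - 1))) 0 := by
        have := (h1.const_add (Nf k x₀ - x₀ v ^ k)).const_mul μ
        simpa using this
      exact h2.sub h3
    have hzero := hmin0.hasDerivAt_eq_zero hder
    have hkne : (k : ℝ) ≠ 0 := by exact_mod_cast hk0.ne'
    exact mul_left_cancel₀ hkne (by linear_combination hzero)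
  have hμmem : μ ∈ specH E k := ⟨x₀, hx₀ne, heig⟩
  have hlb : ∀ lam ∈ specH E k, μ ≤ lam := by
    rintro lam ⟨x, hx, hxe⟩
    have hNx : 0 < Nf k x := Nf_pos hk hk0 hx
    have h1 : lam * Nf k x = (k : ℝ) * Pf E x := eig_identity hU hk0 hxe
    have h2 : μ * Nf k x ≤ (k : ℝ) * Pf E x := key x
    rw [← h1] at h2
    exact le_of_mul_le_mul_right h2 hNx
  have hlam : lamMin E k = μ := by
    refine le_antisymm (csInf_le ⟨μ, hlb⟩ hμmem) (le_csInf ⟨μ, hμmem⟩ hlb)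
  rw [hlam]
  exact ⟨x₀, hN, heig, rfl, key⟩

lemma lamMin_le_neg_one (E : Finset (Finset V)) (k : ℕ) (hk : Even k) (hk0 : 0 < k) [Nonempty V]
    (hU : Uniform E k) (hEne : E.Nonempty) : lamMin E k ≤ -1 := by
  obtain ⟨x₀, _, _, _, key⟩ := lamMin_key E k hk hk0 hU
  obtain ⟨e1, he1⟩ := hEne
  obtain ⟨w1, hw1⟩ : e1.Nonempty := Finset.card_pos.mp (by rw [hU e1 he1]; exact hk0)
  set z : V → ℝ := fun w => if w = w1 then -1 else if w ∈ e1 then 1 else 0 with hz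
  have hNz : Nf k z = (k : ℝ) := by
    have h1 : ∀ v : V, z v ^ k = if v ∈ e1 then 1 else 0 := by
      intro v
      by_cases hv1 : v = w1
      · subst hv1
        simp only [hz, if_pos rfl, if_pos hw1, hk.neg_one_pow]
      · by_cases hve : v ∈ e1
        · simp [hz, hv1, hve]
        · simp [hz, hv1, hve, zero_pow hk0.ne']
    rw [Nf, Finset.sum_congr rfl fun v _ => h1 v, Finset.sum_ite_mem, Finset.univ_inter,
      Finset.sum_const, nsmul_eq_mul, mul_one, hU e1 he1]
  have hPz : Pf E z = -1 := by
    rw [Pf, Finset.sum_eq_single_of_mem e1 he1]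
    · rw [← Finset.mul_prod_erase e1 z hw1]
      have h2 : ∏ w ∈ e1.erase w1, z w = 1 := by
        refine Finset.prod_eq_one fun w hw => ?_
        simp [hz, Finset.ne_of_mem_erase hw, Finset.mem_of_mem_erase hw]
      rw [h2, mul_one]
      simp [hz]
    · intro e he hne
      have hnsub : ¬ e ⊆ e1 := fun hsub =>
        hne (Finset.eq_of_subset_of_card_le hsub (by rw [hU e1 he1, hU e he]))
      obtain ⟨w, hwe, hwn⟩ := Finset.not_subset.mp hnsub
      refine Finset.prod_eq_zero hwe ?_
      have hww1 : w ≠ w1 := fun h => hwn (h ▸ hw1)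
      simp [hz, hww1, hwn]
  have h3 := key z
  rw [hNz, hPz] at h3
  have hkpos : (0:ℝ) < (k : ℝ) := by exact_mod_cast hk0
  nlinarith

lemma exists_edge_at_u {V0 VH : Finset V} {u : V} {E0 EH : Finset (Finset V)} {k : ℕ}
    (hk2 : 2 ≤ k)
    (hI : V0 ∩ VH = {u})
    (hE0 : ∀ e ∈ E0, e ⊆ V0) (hEH : ∀ e ∈ EH, e ⊆ VH)
    (hU : Uniform (E0 ∪ EH) k)
    (hconn : ∀ a b : V, Relation.ReflTransGen (fun a b => a ≠ b ∧ ∃ e ∈ E0 ∪ EH, a ∈ e ∧ b ∈ e) a b)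
    (hEHne : EH.Nonempty) :
    ∃ e ∈ EH, u ∈ e := by
  obtain ⟨eH, heH⟩ := hEHne
  have hcard : 2 ≤ eH.card := by
    rw [hU eH (Finset.mem_union_right _ heH)]; exact hk2
  obtain ⟨a, ha, hau⟩ : ∃ a ∈ eH, a ≠ u := by
    by_contra h
    push_neg at h
    have hsub : eH ⊆ {u} := fun w hw => Finset.mem_singleton.mpr (h w hw)
    have := Finset.card_le_card hsub
    rw [Finset.card_singleton] at this
    omega
  have haVH : a ∈ VH := hEH eH heH ha
  have key : ∀ b, Relation.ReflTransGen (fun a b => a ≠ b ∧ ∃ e ∈ E0 ∪ EH, a ∈ e ∧ b ∈ e) a b →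
      (b ∈ VH ∧ b ≠ u) ∨ ∃ e ∈ EH, u ∈ e := by
    intro b hb
    induction hb with
    | refl => exact Or.inl ⟨haVH, hau⟩
    | @tail p c _ hstep ih =>
      rcases ih with ⟨hpVH, hpu⟩ | he
      · obtain ⟨_, e, heE, hpe, hce⟩ := hstep
        have heEH : e ∈ EH := by
          rcases Finset.mem_union.mp heE with h0 | hH
          · exfalso
            have : p ∈ V0 ∩ VH := Finset.mem_inter.mpr ⟨hE0 e h0 hpe, hpVH⟩
            rw [hI] at this
            exact hpu (Finset.mem_singleton.mp this)
          · exact hH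
        by_cases hcu : c = u
        · exact Or.inr ⟨e, heEH, hcu ▸ hce⟩
        · exact Or.inl ⟨hEH e heEH hce, hcu⟩
      · exact Or.inr he
  rcases key u (hconn a u) with ⟨_, h⟩ | h
  · exact absurd rfl h
  · exact h

end Aux

/-- A first eigenvector: a real eigenvector associated with the least H-eigenvalue. -/
def IsFirstEigvec [Fintype V] [DecidableEq V] (E : Finset (Finset V)) (k : ℕ) (x : V → ℝ) :
    Prop :=
  x ≠ 0 ∧ isEig E k (lamMin E k) x

/-- For the coalescence `G = G₀(u) ⋄ H(u)`, `λ_min(G₀) ≥ λ_min(G)`, with equality only if every first eigenvector `y` of `G₀` satisfies `y u = 0`. -/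
theorem stmt7 [Fintype V] [DecidableEq V]
    (V0 VH : Finset V) (u : V) (E0 EH : Finset (Finset V)) (k : ℕ)
    (hk : Even k) (hk0 : 0 < k)
    (hI : V0 ∩ VH = {u}) (hcover : V0 ∪ VH = Finset.univ)
    (hE0 : ∀ e ∈ E0, e ⊆ V0) (hEH : ∀ e ∈ EH, e ⊆ VH)
    (hU : Uniform (E0 ∪ EH) k) (hconn : HConnected (E0 ∪ EH))
    (hE0ne : E0.Nonempty) (hEHne : EH.Nonempty)
    :
    lamMin (E0 ∪ EH) k ≤ lamMin E0 k ∧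
    (lamMin E0 k = lamMin (E0 ∪ EH) k →
      ∀ y : V → ℝ, IsFirstEigvec E0 k y → y u = 0) := by
  have hk2 : 2 ≤ k := Nat.le_of_dvd hk0 hk.two_dvd
  have hU0 : Uniform E0 k := fun e he => hU e (Finset.mem_union_left _ he)
  have hUH : Uniform EH k := fun e he => hU e (Finset.mem_union_right _ he)
  obtain ⟨e1, he1⟩ := hE0ne
  have hV : Nonempty V := by
    obtain ⟨v, hv⟩ : e1.Nonempty := Finset.card_pos.mp (by rw [hU0 e1 he1]; exact hk0)
    exact ⟨v⟩
  have hdisj : Disjoint E0 EH := by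
    rw [Finset.disjoint_left]
    intro e he0 heH
    have hsub : e ⊆ {u} := by
      rw [← hI]
      exact Finset.subset_inter (hE0 e he0) (hEH e heH)
    have hle := Finset.card_le_card hsub
    rw [hU0 e he0, Finset.card_singleton] at hle
    omega
  have hVHnV0 : ∀ v ∈ VH, v ≠ u → v ∉ V0 := by
    intro v hv hvne hv0
    have hmem : v ∈ V0 ∩ VH := Finset.mem_inter.mpr ⟨hv0, hv⟩
    rw [hI] at hmem
    exact hvne (Finset.mem_singleton.mp hmem)
  have hμ0neg : lamMin E0 k ≤ -1 := lamMin_le_neg_one E0 k hk hk0 hU0 ⟨e1, he1⟩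
  have hμ0ne : lamMin E0 k ≠ 0 := by linarith
  obtain ⟨y₀, hy₀N, hy₀eig, hy₀eq, hkey0⟩ := lamMin_key E0 k hk hk0 hU0
  obtain ⟨x₁, hx₁N, hx₁eig, hx₁eq, hkeyE⟩ := lamMin_key (E0 ∪ EH) k hk hk0 hU
  -- eigenvectors of E0 vanish on VH \ {u}
  have hsupp : ∀ y : V → ℝ, isEig E0 k (lamMin E0 k) y → ∀ v ∈ VH, v ≠ u → y v = 0 := by
    intro y hy v hvVH hvu
    have hfe : E0.filter (fun e => v ∈ e) = ∅ :=
      Finset.filter_eq_empty_iff.mpr fun {e} he hv => hVHnV0 v hvVH hvu (hE0 e he hv)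
    have h1 := hy v
    rw [hfe, Finset.sum_empty] at h1
    have h2 : y v ^ (k - 1) = 0 := by
      rcases mul_eq_zero.mp h1.symm with h | h
      · exact absurd h hμ0ne
      · exact h
    exact pow_eq_zero_iff (by omega : k - 1 ≠ 0) |>.mp h2
  have hedge_ne_u : ∀ e ∈ EH, ∃ w ∈ e, w ≠ u := by
    intro e he
    by_contra h
    push_neg at h
    have hsub : e ⊆ {u} := fun w hw => Finset.mem_singleton.mpr (h w hw)
    have hle := Finset.card_le_card hsub
    rw [Finset.card_singleton, hUH e he] at hle
    omega
  have hPfEH0 : ∀ y : V → ℝ, (∀ v ∈ VH, v ≠ u → y v = 0) → Pf EH y = 0 := by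
    intro y hy
    refine Finset.sum_eq_zero fun e he => ?_
    obtain ⟨w, hw, hwu⟩ := hedge_ne_u e he
    exact Finset.prod_eq_zero hw (hy w (hEH e he hw) hwu)
  have hPfE : ∀ y : V → ℝ, Pf (E0 ∪ EH) y = Pf E0 y + Pf EH y := by
    intro y
    rw [Pf, Finset.sum_union hdisj]
    rfl
  constructor
  · -- part 1
    have h1 := hkeyE y₀
    have hy₀supp : ∀ v ∈ VH, v ≠ u → y₀ v = 0 := hsupp y₀ hy₀eig
    rw [hy₀N, mul_one, hPfE, hPfEH0 y₀ hy₀supp, add_zero] at h1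
    have h2 : lamMin E0 k * Nf k y₀ = (k : ℝ) * Pf E0 y₀ := eig_identity hU0 hk0 hy₀eig
    rw [hy₀N, mul_one] at h2
    linarith
  · -- part 2
    rintro heq y ⟨hyne, hyeig⟩
    by_contra hyu
    obtain ⟨e0, he0EH, hue0⟩ := exists_edge_at_u hk2 hI hE0 hEH hU hconn hEHne
    have hysupp := hsupp y hyeig
    have hNy : 0 < Nf k y := Nf_pos hk hk0 hyne
    have hcard_erase : (e0.erase u).card = k - 1 := by
      rw [Finset.card_erase_of_mem hue0, hUH e0 he0EH]
    set lam0 := lamMin E0 k with hlam0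
    have hk1R : (1:ℝ) ≤ (k:ℝ) - 1 := by
      have : (2:ℝ) ≤ (k:ℝ) := by exact_mod_cast hk2
      linarith
    have hyupos : 0 < |y u| := abs_pos.mpr hyu
    have hkposR : (0:ℝ) < (k:ℝ) := by exact_mod_cast hk0
    set ε : ℝ := ((k:ℝ) * |y u|) / (2 * ((k:ℝ) - 1) * (-lam0)) with hε
    have hεpos : 0 < ε := by
      apply div_pos (by positivity)
      have : (0:ℝ) < -lam0 := by linarith
      positivity
    obtain ⟨t, ht_k, ht_sign⟩ : ∃ t : ℝ, t ^ k = ε ^ k ∧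
        y u * t ^ (k - 1) = -(|y u| * ε ^ (k - 1)) := by
      rcases lt_or_gt_of_ne hyu with h | h
      · exact ⟨ε, rfl, by rw [abs_of_neg h]; ring⟩
      · refine ⟨-ε, hk.neg_pow ε, ?_⟩
        have hodd : Odd (k - 1) := Nat.Even.sub_odd (by omega) hk odd_one
        rw [hodd.neg_pow, abs_of_pos h]
        ring
    set z : V → ℝ := fun w => y w + t * (if w ∈ e0.erase u then 1 else 0) with hzdef
    have hz_on : ∀ w ∈ e0.erase u, z w = t := by
      intro w hw
      have hwVH := hEH e0 he0EH (Finset.mem_of_mem_erase hw)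
      have hwu := Finset.ne_of_mem_erase hw
      show y w + t * (if w ∈ e0.erase u then 1 else 0) = t
      rw [if_pos hw, hysupp w hwVH hwu]
      ring
    have hz_off : ∀ w, w ∉ e0.erase u → z w = y w := by
      intro w hw
      show y w + t * (if w ∈ e0.erase u then 1 else 0) = y w
      rw [if_neg hw]
      ring
    have hkm1cast : ((k - 1 : ℕ) : ℝ) = (k:ℝ) - 1 := by
      push_cast [Nat.cast_sub (by omega : 1 ≤ k)]
      ring
    have hNz : Nf k z = Nf k y + ((k:ℝ) - 1) * t ^ k := by
      have hs1 : ∑ v ∈ e0.erase u, z v ^ k = ((k:ℝ) - 1) * t ^ k := by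
        rw [Finset.sum_congr rfl fun v hv => by rw [hz_on v hv], Finset.sum_const,
          hcard_erase, nsmul_eq_mul, hkm1cast]
      have hs2 : ∑ v ∈ Finset.univ \ e0.erase u, z v ^ k
          = ∑ v ∈ Finset.univ \ e0.erase u, y v ^ k := by
        refine Finset.sum_congr rfl fun v hv => ?_
        rw [hz_off v (Finset.mem_sdiff.mp hv).2]
      have hs3 : ∑ v ∈ e0.erase u, y v ^ k = 0 := by
        refine Finset.sum_eq_zero fun v hv => ?_
        have hwVH := hEH e0 he0EH (Finset.mem_of_mem_erase hv)
        rw [hysupp v hwVH (Finset.ne_of_mem_erase hv), zero_pow hk0.ne']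
      have e1' : Nf k z = ∑ v ∈ Finset.univ \ e0.erase u, z v ^ k + ∑ v ∈ e0.erase u, z v ^ k :=
        (Finset.sum_sdiff (Finset.subset_univ _)).symm
      have e2' : Nf k y = ∑ v ∈ Finset.univ \ e0.erase u, y v ^ k + ∑ v ∈ e0.erase u, y v ^ k :=
        (Finset.sum_sdiff (Finset.subset_univ _)).symm
      rw [e1', e2', hs1, hs2, hs3]
      ring
    have hPf0z : Pf E0 z = Pf E0 y := by
      refine Finset.sum_congr rfl fun e he => Finset.prod_congr rfl fun w hw => ?_
      refine hz_off w fun hc => ?_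
      have hwVH := hEH e0 he0EH (Finset.mem_of_mem_erase hc)
      exact hVHnV0 w hwVH (Finset.ne_of_mem_erase hc) (hE0 e he hw)
    have hPfHz : Pf EH z = y u * t ^ (k - 1) := by
      rw [Pf, Finset.sum_eq_single_of_mem e0 he0EH]
      · rw [← Finset.mul_prod_erase e0 z hue0]
        have hp : ∏ w ∈ e0.erase u, z w = t ^ (k - 1) := by
          rw [Finset.prod_congr rfl hz_on, Finset.prod_const, hcard_erase]
        rw [hp, hz_off u (Finset.notMem_erase u e0)]
      · intro e he hne
        have hnsub : ¬ e ⊆ e0 := fun hsub =>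
          hne (Finset.eq_of_subset_of_card_le hsub (by rw [hUH e0 he0EH, hUH e he]))
        obtain ⟨w, hwe, hwn⟩ := Finset.not_subset.mp hnsub
        have hwu : w ≠ u := fun h => hwn (h ▸ hue0)
        refine Finset.prod_eq_zero hwe ?_
        rw [hz_off w fun hc => hwn (Finset.mem_of_mem_erase hc)]
        exact hysupp w (hEH e he hwe) hwu
    have hid : lam0 * Nf k y = (k:ℝ) * Pf E0 y := eig_identity hU0 hk0 hyeig
    have hkeyz := hkeyE z
    rw [← heq, hNz, hPfE, hPf0z, hPfHz] at hkeyz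
    -- lam0 * (Ny + (k-1) t^k) ≤ k * (Pf E0 y + y u * t^(k-1))
    have hεk : ε ^ k = ε * ε ^ (k - 1) := by
      rw [← pow_succ']
      congr 1
      omega
    have hεk1pos : 0 < ε ^ (k - 1) := pow_pos hεpos _
    have hmain : lam0 * ((k:ℝ) - 1) * (ε * ε ^ (k - 1)) ≤ -((k:ℝ) * (|y u| * ε ^ (k - 1))) := by
      rw [← hεk, ← ht_k]
      nlinarith [hkeyz, hid, ht_sign]
    have h5 : lam0 * ((k:ℝ) - 1) * ε ≤ -((k:ℝ) * |y u|) := by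
      have := hmain
      rw [show lam0 * ((k:ℝ) - 1) * (ε * ε ^ (k-1)) = (lam0 * ((k:ℝ) - 1) * ε) * ε ^ (k-1) by ring,
        show -((k:ℝ) * (|y u| * ε ^ (k-1))) = (-((k:ℝ) * |y u|)) * ε ^ (k-1) by ring] at this
      exact le_of_mul_le_mul_right this hεk1pos
    have h6 : lam0 * ((k:ℝ) - 1) * ε = -((k:ℝ) * |y u|) / 2 := by
      rw [hε]
      have h7 : ((k:ℝ) - 1) ≠ 0 := by linarith
      have h8 : lam0 ≠ 0 := hμ0ne
      field_simp
    rw [h6] at h5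
    nlinarith
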